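/- Let A be a unital C*-algebra, let u be a unitary in A, and let p be a projection in A such that ‖up - pu‖ < 1. Then the element x = pup + (1-p)u(1-p) is invertible in A, and the unitary v = x(x*x)^{-1/2} from the polar decomposition of x commutes with p and is homotopic to u in the unitary group of A. -/

import Mathlib

noncomputable section

/-- A projection in a *-ring. -/
def IsProjection {R : Type*} [Mul R] [Star R] (p : R) : Prop :=
  star p = p ∧ p * p = p

/-- Murray–von Neumann equivalence. -/
def MvNEquiv {R : Type*} [Mul R] [Star R] (p q : R) : Prop :=
  ∃ v : R, star v * v = p ∧ v * star v = q

/-- A properly infinite projection: two orthogonal subprojections each equivalent to `p`. -/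
def IsProperlyInfinite {R : Type*} [Ring R] [StarRing R] (p : R) : Prop :=
  ∃ v w : R, star v * v = p ∧ star w * w = p ∧
    p * (v * star v) = v * star v ∧ p * (w * star w) = w * star w ∧
    (v * star v) * (w * star w) = 0

/-- A full element: contained in no proper closed two-sided ideal. -/
def IsFullElem {R : Type*} [Ring R] [TopologicalSpace R] (a : R) : Prop :=
  ∀ I : TwoSidedIdeal R, IsClosed (I : Set R) → a ∈ I → I = ⊤

/-- `[u] = 0` in `K₁`: some stabilization `diag (u,1,…,1)` is connected to `1` in the unitary
group of a matrix algebra. -/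
def K1Trivial {R : Type*} [Ring R] [StarRing R] [TopologicalSpace R] (u : R) : Prop :=
  ∃ n : ℕ, ∃ w : unitary (Matrix (Fin (n + 1)) (Fin (n + 1)) R),
    w.val
      = Matrix.diagonal (fun i => if i = 0 then u else 1) ∧
    Joined (1 : unitary (Matrix (Fin (n + 1)) (Fin (n + 1)) R)) w

/-- `K₁`-injectivity of a unital C*-algebra. -/
def K1Injective (R : Type*) [Ring R] [StarRing R] [TopologicalSpace R] : Prop :=
  ∀ u : unitary R, K1Trivial (u : R) → Joined (1 : unitary R) u

/-- Homotopy of projections: a continuous path of projections from `p` to `q`. -/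
def HomotopicProj {R : Type*} [Mul R] [Star R] [TopologicalSpace R] (p q : R) : Prop :=
  ∃ f : C(unitInterval, R), f 0 = p ∧ f 1 = q ∧ ∀ t, IsProjection (f t)

/-- Stabilized projection `diag (p, 1, …, 1, 0, …, 0)` (with `k+1` ones). -/
def stabProj {R : Type*} [Ring R] (p : R) (k n : ℕ) : Matrix (Fin (n + 1)) (Fin (n + 1)) R :=
  Matrix.diagonal (fun i => if i = 0 then p else if (i : ℕ) ≤ k + 1 then 1 else 0)

/-- `[p] = [q]` in `K₀` of a unital ring, via stabilized Murray–von Neumann equivalence. -/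
def K0Eq {R : Type*} [Ring R] [StarRing R] (p q : R) : Prop :=
  ∃ k n : ℕ, MvNEquiv (stabProj p k n) (stabProj q k n)



section StmtOneHelpers

private lemma ring_inverse_eq' {A : Type*} [Ring A] {a b : A} (h1 : a * b = 1) (h2 : b * a = 1) :
    Ring.inverse a = b := by
  have hu : IsUnit a := ⟨⟨a, b, h1, h2⟩, rfl⟩
  calc Ring.inverse a = Ring.inverse a * (a * b) := by rw [h1, mul_one]
  _ = (Ring.inverse a * a) * b := by rw [mul_assoc]
  _ = b := by rw [Ring.inverse_mul_cancel _ hu, one_mul]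

private lemma isUnit_smul_one_sub' {A : Type*} [CStarAlgebra A] {y : A} (hy : IsSelfAdjoint y)
    {c : ℂ} (hc : c.im ≠ 0) : IsUnit (c • (1 : A) - y) := by
  rw [← Algebra.algebraMap_eq_smul_one]
  by_contra hcon
  have hmem : c ∈ spectrum ℂ y := spectrum.mem_iff.mpr hcon
  have h2 := hy.mem_spectrum_eq_re hmem
  exact hc (by rw [h2]; simp)

private lemma commute_cfc_of_commute' {A : Type*} [CStarAlgebra A] {p a : A}
    (hps : star p = p) (hpp : p * p = p) (hpa : p * a = a * p) (f : ℝ → ℝ)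
    (ha : IsSelfAdjoint a) :
    p * cfc f a = cfc f a * p := by
  by_cases hf : ContinuousOn f (spectrum ℝ a)
  · set z : A := 1 - (2 : ℝ) • p with hz
    have hzst : star z = z := by rw [hz]; simp [hps]
    have hz2 : z * z = 1 := by
      rw [hz]
      simp only [sub_mul, mul_sub, one_mul, mul_one, smul_mul_assoc, mul_smul_comm, hpp]
      module
    have hza : z * a = a * z := by
      rw [hz, sub_mul, mul_sub, one_mul, mul_one, smul_mul_assoc, mul_smul_comm, hpa]
    let φ : A →⋆ₐ[ℂ] A :=
    { toFun := fun y => z * y * z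
      map_one' := by show z * 1 * z = 1; rw [mul_one, hz2]
      map_mul' := fun r s => by
        show z * (r * s) * z = (z * r * z) * (z * s * z)
        have h3 : z * (z * (s * z)) = s * z := by rw [← mul_assoc, hz2, one_mul]
        simp only [mul_assoc, h3]
      map_zero' := by show z * 0 * z = 0; simp
      map_add' := fun r s => by show z * (r + s) * z = _; rw [mul_add, add_mul]
      commutes' := fun c => by
        show z * ((algebraMap ℂ A) c) * z = algebraMap ℂ A c
        rw [Algebra.algebraMap_eq_smul_one, mul_smul_comm, mul_one, smul_mul_assoc, hz2]
      map_star' := fun y => by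
        show z * star y * z = star (z * y * z)
        rw [star_mul, star_mul, hzst, mul_assoc] }
    have hφcont : Continuous φ := by
      show Continuous fun y => z * y * z
      fun_prop
    have hφa : φ a = a := by
      show z * a * z = a
      rw [hza, mul_assoc, hz2, mul_one]
    have hmap := StarAlgHom.map_cfc φ f a hf hφcont ha (by rw [hφa]; exact ha)
    rw [hφa] at hmap
    have hzc : z * cfc f a * z = cfc f a := hmap
    have hzc' : z * cfc f a = cfc f a * z := by
      calc z * cfc f a = (z * cfc f a * z) * z := by rw [mul_assoc, hz2, mul_one]
      _ = cfc f a * z := by rw [hzc]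
    have hpz : p = (2⁻¹ : ℝ) • ((1 : A) - z) := by rw [hz]; module
    rw [hpz, smul_mul_assoc, mul_smul_comm, sub_mul, mul_sub, one_mul, mul_one, hzc']
  · rw [cfc_apply_of_not_continuousOn a hf, mul_zero, zero_mul]

private lemma joined_one_of_norm_lt_two' {A : Type*} [CStarAlgebra A] (w : unitary A)
    (hw : ‖1 - (w : A)‖ < 2) : Joined (1 : unitary A) w := by
  rcases subsingleton_or_nontrivial A with hA | hA
  · have : (1 : unitary A) = w := Subtype.ext (Subsingleton.elim _ _)
    rw [← this]
  set wv : A := (w : A) with hwv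
  have hsw_w : star wv * wv = 1 := Unitary.star_mul_self_of_mem w.prop
  have hw_sw : wv * star wv = 1 := Unitary.mul_star_self_of_mem w.prop
  have h1pw : IsUnit (1 + wv) := by
    by_contra hcon
    have h2 : (2 : ℂ) ∈ spectrum ℂ (1 - wv) := by
      rw [spectrum.mem_iff]
      intro hU
      apply hcon
      have he : (algebraMap ℂ A) 2 - (1 - wv) = 1 + wv := by
        rw [Algebra.algebraMap_eq_smul_one, two_smul]
        abel
      rwa [he] at hU
    have h3 := spectrum.norm_le_norm_of_mem h2
    have h4 : ‖(2 : ℂ)‖ = 2 := by norm_num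
    rw [h4] at h3
    linarith
  set n : A := Ring.inverse (1 + wv) with hn
  have hn1 : (1 + wv) * n = 1 := Ring.mul_inverse_cancel _ h1pw
  have hn2 : n * (1 + wv) = 1 := Ring.inverse_mul_cancel _ h1pw
  have hnunit : n = ↑h1pw.unit⁻¹ :=
    ring_inverse_eq' h1pw.mul_val_inv h1pw.val_inv_mul
  have hcom_wn : Commute wv n := by
    have c0 : Commute wv (1 + wv) := (Commute.one_right wv).add_right (Commute.refl wv)
    rw [← h1pw.unit_spec] at c0
    rw [hnunit]
    exact c0.units_inv_right
  have hcom_swn : Commute (star wv) n := by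
    have c0 : Commute (star wv) (1 + wv) := by
      unfold Commute SemiconjBy
      rw [mul_add, add_mul, mul_one, one_mul, hsw_w, hw_sw]
    rw [← h1pw.unit_spec] at c0
    rw [hnunit]
    exact c0.units_inv_right
  have hstar_n : star n = n * wv := by
    have h6 : star n * (1 + star wv) = 1 := by
      have := congrArg star hn1
      rwa [star_mul, star_add, star_one] at this
    have h5 : (1 + star wv) * (n * wv) = 1 := by
      calc (1 + star wv) * (n * wv) = ((1 + star wv) * n) * wv := (mul_assoc _ _ _).symm
      _ = (n * (1 + star wv)) * wv := by
          rw [((Commute.one_left n).add_left hcom_swn).eq]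
      _ = n * ((1 + star wv) * wv) := mul_assoc _ _ _
      _ = n * (wv + star wv * wv) := by rw [add_mul, one_mul]
      _ = n * (1 + wv) := by rw [hsw_w, add_comm]
      _ = 1 := hn2
    calc star n = star n * ((1 + star wv) * (n * wv)) := by rw [h5, mul_one]
    _ = (star n * (1 + star wv)) * (n * wv) := by rw [mul_assoc]
    _ = n * wv := by rw [h6, one_mul]
  set s : A := Complex.I • ((1 - wv) * n) with hs
  have hs_sa : IsSelfAdjoint s := by
    rw [IsSelfAdjoint, hs, star_smul, star_mul, Complex.star_def, Complex.conj_I]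
    rw [star_sub, star_one, hstar_n]
    have : n * wv * (1 - star wv) = -((1 - wv) * n) := by
      rw [mul_sub, mul_one, mul_assoc, hw_sw, mul_one, sub_mul, one_mul, ← hcom_wn.eq, neg_sub]
    rw [this, smul_neg, neg_smul, neg_neg]
  have hsa_t : ∀ t : ℝ, IsSelfAdjoint (t • s) := fun t =>
    IsSelfAdjoint.smul (R := ℝ) (star_trivial t) hs_sa
  set M : ℝ → A := fun t => Complex.I • (1 : A) - t • s with hM
  set P : ℝ → A := fun t => Complex.I • (1 : A) + t • s with hP
  have hMu : ∀ t, IsUnit (M t) := fun t =>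
    isUnit_smul_one_sub' (hsa_t t) (by simp)
  have hPu : ∀ t, IsUnit (P t) := by
    intro t
    have := isUnit_smul_one_sub' (hsa_t t).neg (c := Complex.I) (by simp)
    rwa [sub_neg_eq_add] at this
  set q : ℝ → A := fun t => Ring.inverse (P t) with hq
  have hq1 : ∀ t, P t * q t = 1 := fun t => Ring.mul_inverse_cancel _ (hPu t)
  have hq2 : ∀ t, q t * P t = 1 := fun t => Ring.inverse_mul_cancel _ (hPu t)
  have c1 : ∀ t : ℝ, (Complex.I • (1 : A)) * (t • s) = (t • s) * (Complex.I • (1 : A)) := by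
    intro t
    rw [smul_mul_assoc, one_mul, mul_smul_comm, mul_one]
  have hMP : ∀ t : ℝ, M t * P t = P t * M t := by
    intro t
    show (Complex.I • (1 : A) - t • s) * (Complex.I • (1 : A) + t • s)
      = (Complex.I • (1 : A) + t • s) * (Complex.I • (1 : A) - t • s)
    simp only [sub_mul, mul_sub, add_mul, mul_add]
    rw [c1 t]
    abel
  have hstarM : ∀ t : ℝ, star (M t) = -(P t) := by
    intro t
    show star (Complex.I • (1 : A) - t • s) = -(Complex.I • (1 : A) + t • s)
    simp only [star_sub, star_smul, star_one, Complex.star_def, Complex.conj_I,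
      (hsa_t t).star_eq, neg_smul]
    abel
  have hstarP : ∀ t : ℝ, star (P t) = -(M t) := by
    intro t
    show star (Complex.I • (1 : A) + t • s) = -(Complex.I • (1 : A) - t • s)
    simp only [star_add, star_smul, star_one, Complex.star_def, Complex.conj_I,
      (hsa_t t).star_eq, neg_smul]
    abel
  have hstarq : ∀ t : ℝ, star (q t) = -(Ring.inverse (M t)) := by
    intro t
    have e1 : star (q t) * star (P t) = 1 := by rw [← star_mul, hq1 t, star_one]
    have e2 : star (P t) * star (q t) = 1 := by rw [← star_mul, hq2 t, star_one]
    have e3 : M t * (-(star (q t))) = 1 := by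
      rw [mul_neg, ← neg_mul, ← hstarP t, e2]
    have e4 : (-(star (q t))) * M t = 1 := by
      rw [neg_mul, ← mul_neg, ← hstarP t, e1]
    rw [ring_inverse_eq' e3 e4, neg_neg]
  have hcomMq : ∀ t : ℝ, M t * q t = q t * M t := by
    intro t
    calc M t * q t = (q t * P t) * (M t * q t) := by rw [hq2, one_mul]
    _ = q t * (P t * M t) * q t := by simp only [mul_assoc]
    _ = q t * (M t * P t) * q t := by rw [hMP]
    _ = (q t * M t) * (P t * q t) := by simp only [mul_assoc]
    _ = q t * M t := by rw [hq1, mul_one]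
  set γ : ℝ → A := fun t => M t * q t with hγ
  have hstarγ : ∀ t : ℝ, star (γ t) = Ring.inverse (M t) * P t := by
    intro t
    show star (M t * q t) = _
    rw [star_mul, hstarq t, hstarM t, neg_mul, mul_neg, neg_neg]
  have hmem : ∀ t : ℝ, γ t ∈ unitary A := by
    intro t
    rw [Unitary.mem_iff]
    constructor
    · rw [hstarγ t]
      show Ring.inverse (M t) * P t * (M t * q t) = 1
      calc Ring.inverse (M t) * P t * (M t * q t)
          = Ring.inverse (M t) * (P t * M t) * q t := by simp only [mul_assoc]
      _ = Ring.inverse (M t) * (M t * P t) * q t := by rw [hMP]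
      _ = (Ring.inverse (M t) * M t) * (P t * q t) := by simp only [mul_assoc]
      _ = 1 := by rw [Ring.inverse_mul_cancel _ (hMu t), hq1, one_mul]
    · rw [hstarγ t]
      show M t * q t * (Ring.inverse (M t) * P t) = 1
      calc M t * q t * (Ring.inverse (M t) * P t)
          = (q t * M t) * (Ring.inverse (M t) * P t) := by rw [← hcomMq]
      _ = q t * (M t * Ring.inverse (M t)) * P t := by simp only [mul_assoc]
      _ = q t * P t := by rw [Ring.mul_inverse_cancel _ (hMu t), mul_one]
      _ = 1 := hq2 t
  have hI2 : (Complex.I • (1 : A)) * ((-Complex.I) • (1 : A)) = 1 := by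
    rw [smul_mul_smul_comm, one_mul]
    norm_num
  have hI3 : ((-Complex.I) • (1 : A)) * (Complex.I • (1 : A)) = 1 := by
    rw [smul_mul_smul_comm, one_mul]
    norm_num
  have hI : IsUnit (Complex.I • (1 : A)) := ⟨⟨_, _, hI2, hI3⟩, rfl⟩
  have hγ0 : γ 0 = 1 := by
    have hM0 : M 0 = Complex.I • (1 : A) := by show _ - _ = _; rw [zero_smul, sub_zero]
    have hP0 : P 0 = Complex.I • (1 : A) := by show _ + _ = _; rw [zero_smul, add_zero]
    show M 0 * Ring.inverse (P 0) = 1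
    rw [hM0, hP0, Ring.mul_inverse_cancel _ hI]
  have hγ1 : γ 1 = wv := by
    have hM1 : M 1 = (Complex.I * 2) • (wv * n) := by
      show Complex.I • (1 : A) - (1 : ℝ) • s = _
      rw [one_smul, hs, ← smul_sub, ← smul_smul]
      congr 1
      calc (1 : A) - (1 - wv) * n = (1 + wv) * n - (1 - wv) * n := by rw [hn1]
      _ = wv * n + wv * n := by simp only [sub_mul, add_mul, one_mul]; abel
      _ = (2 : ℂ) • (wv * n) := (two_smul ℂ _).symm
    have hP1 : P 1 = (Complex.I * 2) • n := by
      show Complex.I • (1 : A) + (1 : ℝ) • s = _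
      rw [one_smul, hs, ← smul_add, ← smul_smul]
      congr 1
      calc (1 : A) + (1 - wv) * n = (1 + wv) * n + (1 - wv) * n := by rw [hn1]
      _ = n + n := by simp only [sub_mul, add_mul, one_mul]; abel
      _ = (2 : ℂ) • n := (two_smul ℂ _).symm
    have hq1' : q 1 = (Complex.I * 2)⁻¹ • (1 + wv) := by
      have : q 1 = Ring.inverse (P 1) := rfl
      rw [this, hP1]
      apply ring_inverse_eq'
      · rw [smul_mul_smul_comm, mul_inv_cancel₀ (by simp : (Complex.I * 2) ≠ 0), hn2, one_smul]
      · rw [smul_mul_smul_comm, inv_mul_cancel₀ (by simp : (Complex.I * 2) ≠ 0), hn1, one_smul]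
    show M 1 * q 1 = wv
    rw [hM1, hq1', smul_mul_smul_comm, mul_inv_cancel₀ (by simp : (Complex.I * 2) ≠ 0),
      one_smul, mul_assoc, hn2, mul_one]
  have hscont : Continuous fun t : ℝ => t • s := continuous_id.smul continuous_const
  have hMcont : Continuous M := continuous_const.sub hscont
  have hPcont : Continuous P := continuous_const.add hscont
  have hqcont : Continuous q := by
    rw [continuous_iff_continuousAt]
    intro t
    have h1 : ContinuousAt Ring.inverse (P t) := by
      have := NormedRing.inverse_continuousAt (hPu t).unit
      rwa [IsUnit.unit_spec] at this
    exact h1.comp hPcont.continuousAt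
  have hγcont : Continuous γ := hMcont.mul hqcont
  refine ⟨{ toFun := fun t => ⟨γ (t : ℝ), hmem _⟩
            continuous_toFun := ?_
            source' := ?_
            target' := ?_ }⟩
  · exact Continuous.subtype_mk (hγcont.comp continuous_subtype_val) _
  · exact Subtype.ext (by simpa using hγ0)
  · exact Subtype.ext (by simpa using hγ1)

private lemma aux_m_bound' {m t δ : ℝ} (hm : 0 ≤ m) (hδ : 0 ≤ δ) (hmm : m * m = t)
    (ht : t ≤ (1 + δ) * (1 + δ)) : m ≤ 1 + δ := by nlinarith

private lemma aux_sq_bound' {m δ : ℝ} (h0 : 0 ≤ m) (h1 : m ≤ 1 + δ) (h2 : δ < 1) :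
    |(m - 1) ^ 2| ≤ 1 := by
  rw [abs_le]
  constructor <;> nlinarith


end StmtOneHelpers

/-- if `‖up - pu‖ < 1` then `x = pup + (1-p)u(1-p)` is invertible, and the unitary
`v = x (x*x)^{-1/2}` of its polar decomposition commutes with `p` and is homotopic to `u`. -/
theorem stmt1 {A : Type*} [CStarAlgebra A] (u : unitary A) (p : A)
    (hp : IsProjection p) (h : ‖u.val * p - p * u.val‖ < 1) :
    let x := p * u.val * p + (1 - p) * u.val * (1 - p)
    IsUnit x ∧
    ∃ v : unitary A,
      v.val = x * cfc (fun t : ℝ => t ^ (-(1 / 2 : ℝ))) (star x * x) ∧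
      v.val * p = p * v.val ∧ Joined u v := by
  intro x
  obtain ⟨hps, hpp⟩ := hp
  rcases subsingleton_or_nontrivial A with hA | hA
  · exact ⟨⟨1, Subsingleton.elim _ _⟩, u, Subsingleton.elim _ _, Subsingleton.elim _ _,
      Joined.refl u⟩
  letI : PartialOrder A := CStarAlgebra.spectralOrder A
  haveI : StarOrderedRing A := CStarAlgebra.spectralOrderedRing A
  have hx_def : x = p * u.val * p + (1 - p) * u.val * (1 - p) := rfl
  set uv : A := u.val with huv
  set e : A := uv * p - p * uv with he
  set δ : ℝ := ‖e‖ with hδdef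
  have hδ1 : δ < 1 := h
  have hδ0 : 0 ≤ δ := norm_nonneg e
  have hq1p : p * (1 - p) = 0 := by rw [mul_sub, mul_one, hpp, sub_self]
  have hq2p : (1 - p) * p = 0 := by rw [sub_mul, one_mul, hpp, sub_self]
  have h1p_proj : (1 - p) * (1 - p) = 1 - p := by
    rw [sub_mul, one_mul, hq1p, sub_zero]
  have hps1 : star (1 - p : A) = 1 - p := by rw [star_sub, star_one, hps]
  set d : A := uv - x with hd_def
  set a₁ : A := p * uv * (1 - p) with ha₁def
  set b₁ : A := (1 - p) * uv * p with hb₁def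
  have hd : d = a₁ + b₁ := by
    rw [hd_def, hx_def, ha₁def, hb₁def]
    noncomm_ring
  have ha₁ : a₁ = (-e) * (1 - p) := by
    have h1 : (-e) * (1 - p) = p * uv * (1 - p) - uv * (p * (1 - p)) := by
      rw [he]; noncomm_ring
    rw [h1, hq1p, mul_zero, sub_zero, ha₁def]
  have hb₁ : b₁ = e * p := by
    have h1 : e * p = (1 - p) * uv * p + uv * (p * p) - uv * p := by
      rw [he]; noncomm_ring
    rw [h1, hpp, hb₁def]
    abel
  have hcross1 : star a₁ * b₁ = 0 := by
    have h1 : star a₁ * b₁ = ((1 - p) * star uv) * (p * (1 - p)) * (uv * p) := by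
      rw [ha₁def, hb₁def]
      simp only [star_mul, hps1, hps]
      noncomm_ring
    rw [h1, hq1p, mul_zero, zero_mul]
  have hcross2 : star b₁ * a₁ = 0 := by
    have h1 : star b₁ * a₁ = (p * star uv) * ((1 - p) * p) * (uv * (1 - p)) := by
      rw [ha₁def, hb₁def]
      simp only [star_mul, hps1, hps]
      noncomm_ring
    rw [h1, hq2p, mul_zero, zero_mul]
  have hdd : star d * d = star a₁ * a₁ + star b₁ * b₁ := by
    rw [hd, star_add, add_mul, mul_add, mul_add, hcross1, hcross2, add_zero, zero_add]
  have bound1 : star a₁ * a₁ ≤ (δ * δ) • ((1 : A) - p) := by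
    have h1 : star a₁ * a₁ = (1 - p : A) * (star (-e) * (-e)) * (1 - p) := by
      rw [ha₁, star_mul, hps1]
      simp only [mul_assoc]
    have h2 := CStarAlgebra.star_left_conjugate_le_norm_smul (a := (1 - p : A)) (b := star (-e) * (-e))
      (IsSelfAdjoint.star_mul_self (-e))
    rw [CStarRing.norm_star_mul_self, norm_neg, ← hδdef, hps1, h1p_proj, ← h1] at h2
    exact h2
  have bound2 : star b₁ * b₁ ≤ (δ * δ) • p := by
    have h1 : star b₁ * b₁ = p * (star e * e) * p := by
      rw [hb₁, star_mul, hps]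
      simp only [mul_assoc]
    have h2 := CStarAlgebra.star_left_conjugate_le_norm_smul (a := p) (b := star e * e)
      (IsSelfAdjoint.star_mul_self e)
    rw [CStarRing.norm_star_mul_self, ← hδdef, hps, hpp, ← h1] at h2
    exact h2
  have hsum : star d * d ≤ (δ * δ) • (1 : A) := by
    rw [hdd]
    calc star a₁ * a₁ + star b₁ * b₁ ≤ (δ * δ) • ((1 : A) - p) + (δ * δ) • p :=
      add_le_add bound1 bound2
    _ = (δ * δ) • (1 : A) := by rw [← smul_add, sub_add_cancel]
  have hdd_norm : ‖star d * d‖ ≤ δ * δ := by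
    have h2 := CStarAlgebra.norm_le_norm_of_nonneg_of_le (star_mul_self_nonneg d) hsum
    rwa [norm_smul, norm_one, mul_one, Real.norm_eq_abs, abs_of_nonneg (by positivity)] at h2
  have hd_norm : ‖d‖ ≤ δ := by
    have h3 : ‖star d * d‖ = ‖d‖ * ‖d‖ := CStarRing.norm_star_mul_self
    nlinarith [norm_nonneg d]
  -- invertibility of x
  have hx_ueq : x = uv - d := by rw [hd_def, sub_sub_cancel]
  have hsuu : star uv * uv = 1 := Unitary.coe_star_mul_self u
  have huus : uv * star uv = 1 := Unitary.coe_mul_star_self u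
  have hsx_small : ‖(1 : A) - star uv * x‖ < 1 := by
    have h1 : (1 : A) - star uv * x = star uv * d := by
      rw [hd_def, mul_sub, hsuu]
    rw [h1]
    calc ‖star uv * d‖ = ‖d‖ := by
          have := CStarRing.norm_coe_unitary_mul (star u) d
          simpa using this
    _ ≤ δ := hd_norm
    _ < 1 := hδ1
  have hsux_unit : IsUnit (star uv * x) := by
    have h1 := (Units.oneSub ((1 : A) - star uv * x) hsx_small).isUnit
    rwa [Units.val_oneSub, sub_sub_cancel] at h1
  have hx_unit : IsUnit x := by
    have h1 : x = uv * (star uv * x) := by rw [← mul_assoc, huus, one_mul]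
    rw [h1]
    exact (Unitary.toUnits u).isUnit.mul hsux_unit
  -- the positive element a = x⁎x and its inverse square root
  set a : A := star x * x with ha_def
  have ha_nonneg : (0 : A) ≤ a := star_mul_self_nonneg x
  have ha_sa : IsSelfAdjoint a := IsSelfAdjoint.star_mul_self x
  have ha_unit : IsUnit a := hx_unit.star.mul hx_unit
  have hspec0 : (0 : ℝ) ∉ spectrum ℝ a := spectrum.zero_notMem_iff ℝ |>.mpr ha_unit
  have hspec_pos : ∀ t ∈ spectrum ℝ a, 0 < t := fun t ht =>
    lt_of_le_of_ne (spectrum_nonneg_of_nonneg ha_nonneg ht) (fun h0 => hspec0 (h0 ▸ ht))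
  have hnx : ‖x‖ ≤ 1 + δ := by
    calc ‖x‖ = ‖uv - d‖ := by rw [← hx_ueq]
    _ ≤ ‖uv‖ + ‖d‖ := norm_sub_le _ _
    _ ≤ 1 + δ := by
        have h1 : ‖uv‖ = 1 := CStarRing.norm_coe_unitary u
        rw [h1]
        linarith
  have hspec_ub : ∀ t ∈ spectrum ℝ a, t ≤ (1 + δ) * (1 + δ) := by
    intro t ht
    have h1 := spectrum.norm_le_norm_of_mem ht
    have h2 : ‖a‖ = ‖x‖ * ‖x‖ := CStarRing.norm_star_mul_self
    have h3 : ‖x‖ * ‖x‖ ≤ (1 + δ) * (1 + δ) := by nlinarith [norm_nonneg x]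
    have h4 : t ≤ ‖t‖ := le_abs_self t
    nlinarith [h1, h2]
  set f : ℝ → ℝ := fun t => t ^ (-(1 / 2 : ℝ)) with hf_def
  have hf_cont : ContinuousOn f (spectrum ℝ a) := fun t ht =>
    (Real.continuousAt_rpow_const t _ (Or.inl (hspec_pos t ht).ne')).continuousWithinAt
  set b : A := cfc f a with hb_def
  have hb_sa : IsSelfAdjoint b := cfc_predicate f a
  have hff : ∀ t ∈ spectrum ℝ a, f t * f t = t⁻¹ := by
    intro t ht
    rw [hf_def, ← Real.rpow_add (hspec_pos t ht)]
    norm_num [Real.rpow_neg_one]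
  have hbab : b * a * b = 1 := by
    rw [hb_def]
    nth_rewrite 2 [← cfc_id ℝ a ha_sa]
    rw [← cfc_mul f id a hf_cont (continuousOn_id), ← cfc_mul (fun x => f x * id x) f a (hf_cont.mul continuousOn_id) hf_cont]
    have heq : (spectrum ℝ a).EqOn (fun t => f t * id t * f t) (fun _ => (1 : ℝ)) := by
      intro t ht
      show f t * id t * f t = 1
      have h1 : f t * id t * f t = f t * f t * t := by simp only [id]; ring
      rw [h1, hff t ht, inv_mul_cancel₀ (hspec_pos t ht).ne']
    rw [cfc_congr heq, cfc_const_one ℝ a]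
  have hbba : (b * b) * a = 1 := by
    rw [hb_def]
    nth_rewrite 3 [← cfc_id ℝ a ha_sa]
    rw [← cfc_mul f f a hf_cont hf_cont, ← cfc_mul (fun x => f x * f x) id a (hf_cont.mul hf_cont) (continuousOn_id)]
    have heq : (spectrum ℝ a).EqOn (fun t => f t * f t * id t) (fun _ => (1 : ℝ)) := by
      intro t ht
      show f t * f t * id t = 1
      rw [show f t * f t * id t = f t * f t * t from rfl, hff t ht,
        inv_mul_cancel₀ (hspec_pos t ht).ne']
    rw [cfc_congr heq, cfc_const_one ℝ a]
  set v : A := x * b with hv_def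
  have hvsv : star v * v = 1 := by
    rw [hv_def]
    calc star (x * b) * (x * b) = b * (star x * x) * b := by
          rw [star_mul, hb_sa.star_eq]
          simp only [mul_assoc]
    _ = 1 := by rw [← ha_def, hbab]
  have hsxeq : star x = a * ↑hx_unit.unit⁻¹ := by
    rw [ha_def, mul_assoc, hx_unit.mul_val_inv, mul_one]
  have hvvs : v * star v = 1 := by
    rw [hv_def]
    calc (x * b) * star (x * b) = x * ((b * b) * a) * ↑hx_unit.unit⁻¹ := by
          rw [star_mul, hb_sa.star_eq, hsxeq]
          simp only [mul_assoc]
    _ = 1 := by rw [hbba, mul_one, hx_unit.mul_val_inv]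
  have hv_mem : v ∈ unitary A := Unitary.mem_iff.mpr ⟨hvsv, hvvs⟩
  -- commutation with p
  have hxp : x * p = p * x := by
    have h1 : x * p = p * uv * (p * p) + (1 - p) * uv * ((1 - p) * p) := by
      rw [hx_def]; noncomm_ring
    have h2 : p * x = (p * p) * uv * p + (p * (1 - p)) * uv * (1 - p) := by
      rw [hx_def]; noncomm_ring
    rw [h1, h2, hpp, hq1p, hq2p, mul_zero, add_zero, zero_mul, zero_mul, add_zero]
  have hsxp : p * star x = star x * p := by
    have h1 := congrArg star hxp
    rwa [star_mul, star_mul, hps] at h1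
  have hap : p * a = a * p := by
    rw [ha_def]
    calc p * (star x * x) = (p * star x) * x := by rw [mul_assoc]
    _ = (star x * p) * x := by rw [hsxp]
    _ = star x * (p * x) := by rw [mul_assoc]
    _ = star x * (x * p) := by rw [hxp]
    _ = (star x * x) * p := by rw [mul_assoc]
  have hbp : p * b = b * p := by
    rw [hb_def]
    exact commute_cfc_of_commute' hps hpp hap f ha_sa
  have hvp : v * p = p * v := by
    rw [hv_def]
    calc x * b * p = x * (b * p) := by rw [mul_assoc]
    _ = x * (p * b) := by rw [hbp]
    _ = (x * p) * b := by rw [mul_assoc]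
    _ = (p * x) * b := by rw [hxp]
    _ = p * (x * b) := by rw [mul_assoc]
  -- norm estimate for x - v
  have h1b : cfc (fun t => 1 - f t) a = (1 : A) - b := by
    rw [cfc_sub (fun _ : ℝ => (1 : ℝ)) f a continuousOn_const hf_cont, cfc_const_one ℝ a, hb_def]
  have hxmv : x - v = x * ((1 : A) - b) := by rw [hv_def, mul_sub, mul_one]
  have hgq : star (x - v) * (x - v) = cfc (fun t => (1 - f t) * t * (1 - f t)) a := by
    have hsb : star ((1 : A) - b) = (1 : A) - b := by
      rw [star_sub, star_one, hb_sa.star_eq]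
    have h1 : star (x - v) * (x - v) = ((1 : A) - b) * a * ((1 : A) - b) := by
      rw [hxmv, star_mul, hsb, ha_def]
      simp only [mul_assoc]
    rw [h1, ← h1b]
    nth_rewrite 2 [← cfc_id ℝ a ha_sa]
    rw [← cfc_mul (fun t => 1 - f t) id a ((continuousOn_const).sub hf_cont) (continuousOn_id),
      ← cfc_mul (fun x => (1 - f x) * id x) (fun t => 1 - f t) a (((continuousOn_const).sub hf_cont).mul (continuousOn_id))
        ((continuousOn_const).sub hf_cont)]
    rfl
  have hgbound : ∀ t ∈ spectrum ℝ a, ‖(1 - f t) * t * (1 - f t)‖ ≤ 1 := by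
    intro t ht
    have ht_pos := hspec_pos t ht
    have ht_ub := hspec_ub t ht
    set m : ℝ := t ^ (1 / 2 : ℝ) with hm_def
    have hm_nonneg : 0 ≤ m := Real.rpow_nonneg ht_pos.le _
    have hmm : m * m = t := by
      rw [hm_def, ← Real.rpow_add ht_pos]
      norm_num [Real.rpow_one]
    have hr : t * f t = m := by
      rw [hf_def]
      show t * t ^ (-(1 / 2 : ℝ)) = m
      nth_rewrite 1 [← Real.rpow_one t]
      rw [← Real.rpow_add ht_pos, hm_def]
      norm_num
    have hmr : (t * f t) * f t = 1 := by
      rw [hr, hm_def, hf_def]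
      show t ^ (1 / 2 : ℝ) * t ^ (-(1 / 2 : ℝ)) = 1
      rw [← Real.rpow_add ht_pos]
      norm_num [Real.rpow_zero]
    have hg : (1 - f t) * t * (1 - f t) = (m - 1) ^ 2 := by
      calc (1 - f t) * t * (1 - f t) = t - t * f t - (t * f t) + (t * f t) * f t := by ring
      _ = t - m - m + 1 := by rw [hmr, hr]
      _ = (m - 1) ^ 2 := by rw [← hmm]; ring
    have hm_ub : m ≤ 1 + δ := aux_m_bound' hm_nonneg hδ0 hmm ht_ub
    rw [hg, Real.norm_eq_abs]
    exact aux_sq_bound' hm_nonneg hm_ub hδ1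
  have hxv_norm : ‖x - v‖ ≤ 1 := by
    have h1 : ‖star (x - v) * (x - v)‖ ≤ 1 := by
      rw [hgq]
      exact norm_cfc_le zero_le_one hgbound
    have h2 : ‖star (x - v) * (x - v)‖ = ‖x - v‖ * ‖x - v‖ := CStarRing.norm_star_mul_self
    nlinarith [norm_nonneg (x - v)]
  have huvv : ‖uv - v‖ < 2 := by
    have h1 : uv - v = d + (x - v) := by rw [hd_def]; abel
    calc ‖uv - v‖ = ‖d + (x - v)‖ := by rw [h1]
    _ ≤ ‖d‖ + ‖x - v‖ := norm_add_le _ _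
    _ < 2 := by linarith
  -- homotopy
  set V : unitary A := ⟨v, hv_mem⟩ with hV
  set W : unitary A := (star u) * V with hW
  have hWval : (W : A) = star uv * v := rfl
  have h1W : ‖1 - (W : A)‖ < 2 := by
    have h1 : (1 : A) - star uv * v = star uv * (uv - v) := by
      rw [mul_sub, hsuu]
    rw [hWval, h1]
    calc ‖star uv * (uv - v)‖ = ‖uv - v‖ := by
          have := CStarRing.norm_coe_unitary_mul (star u) (uv - v)
          simpa using this
    _ < 2 := huvv
  have hJ1W : Joined (1 : unitary A) W := joined_one_of_norm_lt_two' W h1W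
  have hJuV : Joined u V := by
    have hcont : Continuous (fun z : unitary A => u * z) := continuous_const.mul continuous_id
    have h1 : Joined (u * (1 : unitary A)) (u * W) := ⟨(hJ1W.somePath).map hcont⟩
    have h2 : u * W = V := by
      rw [hW, ← mul_assoc, Unitary.star_eq_inv, mul_inv_cancel, one_mul]
    rwa [mul_one, h2] at h1
  exact ⟨hx_unit, V, rfl, hvp, hJuV⟩
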